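/- Parallel extension preserves links for β-rules: under the same hypotheses, if T₁ extends T₀ at open leaf b by a β-rule splitting b into b.0 and b.1, then applying the corresponding two-premise GS3 β-rule at every open leaf s of π₀ with μ₀(s) = b, and mapping the two new children of s to b.0 and b.1 respectively, yields a proof-tree linked to (T₁, σ). -/

import Mathlib

/-- First-order terms: de Bruijn bound variables, free (meta)variables, function applications. -/
inductive Tm : Type
  | var : ℕ → Tm
  | mvar : ℕ → Tm
  | fn : ℕ → List Tm → Tm

/-- First-order formulas (de Bruijn representation for quantifiers). -/
inductive Fm : Type
  | atom : ℕ → List Tm → Fm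
  | neg : Fm → Fm
  | and : Fm → Fm → Fm
  | or : Fm → Fm → Fm
  | imp : Fm → Fm → Fm
  | all : Fm → Fm
  | ex : Fm → Fm

mutual
/-- Apply a substitution of metavariables to a term. -/
def substTm (σ : ℕ → Tm) : Tm → Tm
  | .var n => .var n
  | .mvar X => σ X
  | .fn f ts => .fn f (substTms σ ts)
def substTms (σ : ℕ → Tm) : List Tm → List Tm
  | [] => []
  | t :: ts => substTm σ t :: substTms σ ts
end

mutual
/-- Replace bound variable `k` by the term `u` (assumed closed), shifting down. -/
def instTm (u : Tm) (k : ℕ) : Tm → Tm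
  | .var n => if n = k then u else if k < n then .var (n - 1) else .var n
  | .mvar X => .mvar X
  | .fn f ts => .fn f (instTms u k ts)
def instTms (u : Tm) (k : ℕ) : List Tm → List Tm
  | [] => []
  | t :: ts => instTm u k t :: instTms u k ts
end

mutual
/-- Metavariables occurring in a term. -/
def mvarsTm : Tm → List ℕ
  | .var _ => []
  | .mvar X => [X]
  | .fn _ ts => mvarsTms ts
def mvarsTms : List Tm → List ℕ
  | [] => []
  | t :: ts => mvarsTm t ++ mvarsTms ts
end

def Fm.substF (σ : ℕ → Tm) : Fm → Fm
  | .atom P ts => .atom P (substTms σ ts)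
  | .neg A => .neg (A.substF σ)
  | .and A B => .and (A.substF σ) (B.substF σ)
  | .or A B => .or (A.substF σ) (B.substF σ)
  | .imp A B => .imp (A.substF σ) (B.substF σ)
  | .all A => .all (A.substF σ)
  | .ex A => .ex (A.substF σ)

def Fm.instF (u : Tm) (k : ℕ) : Fm → Fm
  | .atom P ts => .atom P (instTms u k ts)
  | .neg A => .neg (A.instF u k)
  | .and A B => .and (A.instF u k) (B.instF u k)
  | .or A B => .or (A.instF u k) (B.instF u k)
  | .imp A B => .imp (A.instF u k) (B.instF u k)
  | .all A => .all (A.instF u (k + 1))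
  | .ex A => .ex (A.instF u (k + 1))

/-- Instantiate the outermost bound variable of a quantified formula body. -/
def Fm.inst1 (u : Tm) (A : Fm) : Fm := A.instF u 0

def Fm.mvarsF : Fm → List ℕ
  | .atom _ ts => mvarsTms ts
  | .neg A => A.mvarsF
  | .and A B => A.mvarsF ++ B.mvarsF
  | .or A B => A.mvarsF ++ B.mvarsF
  | .imp A B => A.mvarsF ++ B.mvarsF
  | .all A => A.mvarsF
  | .ex A => A.mvarsF

/-- Occurrence of a subterm satisfying `P` inside a term. -/
inductive OccT (P : Tm → Prop) : Tm → Prop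
  | here {t} : P t → OccT P t
  | arg {f ts t} : t ∈ ts → OccT P t → OccT P (.fn f ts)

/-- Occurrence of a subterm satisfying `P` inside a formula. -/
inductive OccF (P : Tm → Prop) : Fm → Prop
  | atom {n ts t} : t ∈ ts → OccT P t → OccF P (.atom n ts)
  | neg {A} : OccF P A → OccF P (.neg A)
  | andL {A B} : OccF P A → OccF P (.and A B)
  | andR {A B} : OccF P B → OccF P (.and A B)
  | orL {A B} : OccF P A → OccF P (.or A B)
  | orR {A B} : OccF P B → OccF P (.or A B)
  | impL {A B} : OccF P A → OccF P (.imp A B)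
  | impR {A B} : OccF P B → OccF P (.imp A B)
  | all {A} : OccF P A → OccF P (.all A)
  | ex {A} : OccF P A → OccF P (.ex A)

/-- The function/constant symbol `c` occurs in the term. -/
def SymInTm (c : ℕ) : Tm → Prop := OccT (fun u => ∃ ts, u = .fn c ts)
/-- The function/constant symbol `c` occurs in the formula. -/
def SymInFm (c : ℕ) : Fm → Prop := OccF (fun u => ∃ ts, u = .fn c ts)
/-- The metavariable `X` occurs in the formula. -/
def MvarInFm (X : ℕ) : Fm → Prop := OccF (fun u => u = .mvar X)
/-- The term `u` occurs as a subterm in the formula. -/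
def TmInFm (u : Tm) : Fm → Prop := OccF (fun v => v = u)

/-- GS3: one-sided, cut-free sequent calculus with implicit contraction and
explicit weakening; `GS3 Δ` means the sequent `Δ ⊢` is derivable. -/
inductive GS3 : Multiset Fm → Prop
  | ax {Δ A} : A ∈ Δ → Fm.neg A ∈ Δ → GS3 Δ
  | weak {Δ A} : GS3 Δ → GS3 (A ::ₘ Δ)
  | andE {Δ A B} : Fm.and A B ∈ Δ → GS3 (A ::ₘ B ::ₘ Δ) → GS3 Δ
  | negOrE {Δ A B} : Fm.neg (Fm.or A B) ∈ Δ → GS3 (Fm.neg A ::ₘ Fm.neg B ::ₘ Δ) → GS3 Δ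
  | negImpE {Δ A B} : Fm.neg (Fm.imp A B) ∈ Δ → GS3 (A ::ₘ Fm.neg B ::ₘ Δ) → GS3 Δ
  | negNegE {Δ A} : Fm.neg (Fm.neg A) ∈ Δ → GS3 (A ::ₘ Δ) → GS3 Δ
  | orE {Δ A B} : Fm.or A B ∈ Δ → GS3 (A ::ₘ Δ) → GS3 (B ::ₘ Δ) → GS3 Δ
  | impE {Δ A B} : Fm.imp A B ∈ Δ → GS3 (Fm.neg A ::ₘ Δ) → GS3 (B ::ₘ Δ) → GS3 Δ
  | negAndE {Δ A B} : Fm.neg (Fm.and A B) ∈ Δ → GS3 (Fm.neg A ::ₘ Δ) → GS3 (Fm.neg B ::ₘ Δ) → GS3 Δ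
  | allE {Δ A} (t : Tm) : Fm.all A ∈ Δ → GS3 (Fm.inst1 t A ::ₘ Δ) → GS3 Δ
  | negExE {Δ A} (t : Tm) : Fm.neg (Fm.ex A) ∈ Δ → GS3 (Fm.neg (Fm.inst1 t A) ::ₘ Δ) → GS3 Δ
  | exE {Δ A} (c : ℕ) : Fm.ex A ∈ Δ → (∀ B ∈ Δ, ¬ SymInFm c B) →
      GS3 (Fm.inst1 (Tm.fn c []) A ::ₘ Δ) → GS3 Δ
  | negAllE {Δ A} (c : ℕ) : Fm.neg (Fm.all A) ∈ Δ → (∀ B ∈ Δ, ¬ SymInFm c B) →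
      GS3 (Fm.neg (Fm.inst1 (Tm.fn c []) A) ::ₘ Δ) → GS3 Δ
/-- A rule application label (shared between tableaux and GS3 proof-trees). -/
inductive RuleApp : Type
  | andR (A B : Fm) | negOrR (A B : Fm) | negImpR (A B : Fm) | negNegR (A : Fm)
  | orR (A B : Fm) | impR (A B : Fm) | negAndR (A B : Fm)
  | allR (A : Fm) (t : Tm) | negExR (A : Fm) (t : Tm)
  | exR (A : Fm) (t : Tm) | negAllR (A : Fm) (t : Tm)
  | closureR (A B : Fm)
  | weakR (Δ' : Multiset Fm)

/-- The premises (children multisets) generated by a rule applied to `Δ`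
(rules are non-destructive: the principal formula is kept). -/
def RuleApp.kids (Δ : Multiset Fm) : RuleApp → List (Multiset Fm)
  | .andR A B => [A ::ₘ B ::ₘ Δ]
  | .negOrR A B => [Fm.neg A ::ₘ Fm.neg B ::ₘ Δ]
  | .negImpR A B => [A ::ₘ Fm.neg B ::ₘ Δ]
  | .negNegR A => [A ::ₘ Δ]
  | .orR A B => [A ::ₘ Δ, B ::ₘ Δ]
  | .impR A B => [Fm.neg A ::ₘ Δ, B ::ₘ Δ]
  | .negAndR A B => [Fm.neg A ::ₘ Δ, Fm.neg B ::ₘ Δ]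
  | .allR A t => [Fm.inst1 t A ::ₘ Δ]
  | .negExR A t => [Fm.neg (Fm.inst1 t A) ::ₘ Δ]
  | .exR A t => [Fm.inst1 t A ::ₘ Δ]
  | .negAllR A t => [Fm.neg (Fm.inst1 t A) ::ₘ Δ]
  | .closureR _ _ => []
  | .weakR Δ' => [Δ']

def RuleApp.isClosure : RuleApp → Prop
  | .closureR _ _ => True
  | _ => False

def RuleApp.isAlpha : RuleApp → Prop
  | .andR _ _ | .negOrR _ _ | .negImpR _ _ | .negNegR _ => True
  | _ => False

def RuleApp.isBeta : RuleApp → Prop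
  | .orR _ _ | .impR _ _ | .negAndR _ _ => True
  | _ => False

def RuleApp.isDelta : RuleApp → Prop
  | .exR _ _ | .negAllR _ _ => True
  | _ => False

/-- Instantiation of a rule application by a substitution of metavariables. -/
def RuleApp.substR (σ : ℕ → Tm) : RuleApp → RuleApp
  | .andR A B => .andR (A.substF σ) (B.substF σ)
  | .negOrR A B => .negOrR (A.substF σ) (B.substF σ)
  | .negImpR A B => .negImpR (A.substF σ) (B.substF σ)
  | .negNegR A => .negNegR (A.substF σ)
  | .orR A B => .orR (A.substF σ) (B.substF σ)
  | .impR A B => .impR (A.substF σ) (B.substF σ)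
  | .negAndR A B => .negAndR (A.substF σ) (B.substF σ)
  | .allR A t => .allR (A.substF σ) (substTm σ t)
  | .negExR A t => .negExR (A.substF σ) (substTm σ t)
  | .exR A t => .exR (A.substF σ) (substTm σ t)
  | .negAllR A t => .negAllR (A.substF σ) (substTm σ t)
  | .closureR A B => .closureR (A.substF σ) (B.substF σ)
  | .weakR Δ' => .weakR (Δ'.map (Fm.substF σ))

/-- Trees of multisets of formulas: `leaf` is an *open* leaf; internal nodes are
labelled with the rule applied there (a `closureR` node with no children is a closed leaf). -/
inductive FTree : Type
  | leaf : Multiset Fm → FTree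
  | node : Multiset Fm → RuleApp → List FTree → FTree

def FTree.root : FTree → Multiset Fm
  | .leaf Δ => Δ
  | .node Δ _ _ => Δ

/-- The subtree at a path (children indexed by position). -/
def FTree.subAt (t : FTree) : List ℕ → Option FTree
  | [] => some t
  | i :: p =>
    match t with
    | .leaf _ => none
    | .node _ _ ts =>
      match ts[i]? with
      | some t' => t'.subAt p
      | none => none

/-- The multiset at an open leaf located at the given path, if any. -/
def FTree.openLeafAt (t : FTree) (p : List ℕ) : Option (Multiset Fm) :=
  match t.subAt p with
  | some (.leaf Δ) => some Δ
  | _ => none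

/-- The rule applied at the node located at the given path, if any. -/
def FTree.ruleAt (t : FTree) (p : List ℕ) : Option RuleApp :=
  match t.subAt p with
  | some (.node _ r _) => some r
  | _ => none

/-- A tree is closed when it has no open leaves. -/
def FTree.closedT (t : FTree) : Prop := ∀ p Δ, t.subAt p ≠ some (.leaf Δ)

/-- Extend a tree by applying rule `r` at the open leaf located at path `p`. -/
def FTree.extend (r : RuleApp) : List ℕ → FTree → FTree
  | [], .leaf Δ => .node Δ r ((r.kids Δ).map .leaf)
  | [], t => t
  | _ :: _, .leaf Δ => .leaf Δ
  | i :: p, .node Δ r' ts => .node Δ r' (ts.modify i (FTree.extend r p))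
  termination_by p _ => p.length

/-- Well-formed trees w.r.t. a side-condition `Ok` on rule applications:
children carry exactly the premises generated by the rule. -/
inductive WFT (Ok : Multiset Fm → RuleApp → Prop) : FTree → Prop
  | leaf {Δ} : WFT Ok (.leaf Δ)
  | node {Δ r ts} : Ok Δ r → ts.map FTree.root = r.kids Δ →
      (∀ t ∈ ts, WFT Ok t) → WFT Ok (.node Δ r ts)

/-- Side conditions of GS3: principal formula present, genuinely fresh
constants in δ-rules, arbitrary terms in γ-rules, axiom on `A, ¬A`. -/
def okGS3 : Multiset Fm → RuleApp → Prop
  | Δ, .andR A B => Fm.and A B ∈ Δ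
  | Δ, .negOrR A B => Fm.neg (Fm.or A B) ∈ Δ
  | Δ, .negImpR A B => Fm.neg (Fm.imp A B) ∈ Δ
  | Δ, .negNegR A => Fm.neg (Fm.neg A) ∈ Δ
  | Δ, .orR A B => Fm.or A B ∈ Δ
  | Δ, .impR A B => Fm.imp A B ∈ Δ
  | Δ, .negAndR A B => Fm.neg (Fm.and A B) ∈ Δ
  | Δ, .allR A _ => Fm.all A ∈ Δ
  | Δ, .negExR A _ => Fm.neg (Fm.ex A) ∈ Δ
  | Δ, .exR A t => Fm.ex A ∈ Δ ∧ ∃ c, t = Tm.fn c [] ∧ ∀ B ∈ Δ, ¬ SymInFm c B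
  | Δ, .negAllR A t => Fm.neg (Fm.all A) ∈ Δ ∧ ∃ c, t = Tm.fn c [] ∧ ∀ B ∈ Δ, ¬ SymInFm c B
  | Δ, .closureR A B => A ∈ Δ ∧ B ∈ Δ ∧ B = Fm.neg A
  | Δ, .weakR Δ' => Δ' ⊆ Δ

/-- Side conditions of free-variable tableaux with on-the-fly inner
Skolemization, relative to the global unifier `σ`: γ-rules use fresh
metavariables, δ-rules use a fresh Skolem symbol applied to the metavariables
of the Skolemized formula, closure needs the two formulas to be σ-opposite. -/
def okTabFV (σ : ℕ → Tm) : Multiset Fm → RuleApp → Prop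
  | Δ, .andR A B => Fm.and A B ∈ Δ
  | Δ, .negOrR A B => Fm.neg (Fm.or A B) ∈ Δ
  | Δ, .negImpR A B => Fm.neg (Fm.imp A B) ∈ Δ
  | Δ, .negNegR A => Fm.neg (Fm.neg A) ∈ Δ
  | Δ, .orR A B => Fm.or A B ∈ Δ
  | Δ, .impR A B => Fm.imp A B ∈ Δ
  | Δ, .negAndR A B => Fm.neg (Fm.and A B) ∈ Δ
  | Δ, .allR A t => Fm.all A ∈ Δ ∧ ∃ X, t = Tm.mvar X ∧ ∀ B ∈ Δ, ¬ MvarInFm X B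
  | Δ, .negExR A t => Fm.neg (Fm.ex A) ∈ Δ ∧ ∃ X, t = Tm.mvar X ∧ ∀ B ∈ Δ, ¬ MvarInFm X B
  | Δ, .exR A t => Fm.ex A ∈ Δ ∧
      ∃ f, t = Tm.fn f (((Fm.ex A).mvarsF.dedup).map Tm.mvar) ∧ ∀ B ∈ Δ, ¬ SymInFm f B
  | Δ, .negAllR A t => Fm.neg (Fm.all A) ∈ Δ ∧
      ∃ f, t = Tm.fn f (((Fm.neg (Fm.all A)).mvarsF.dedup).map Tm.mvar) ∧ ∀ B ∈ Δ, ¬ SymInFm f B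
  | Δ, .closureR A B => A ∈ Δ ∧ B ∈ Δ ∧ Fm.substF σ B = Fm.neg (Fm.substF σ A)
  | _, .weakR _ => False

/-- Initial part of a tree (same root and rules up to some open leaves;
a closed leaf of `T` may not be replaced by an open leaf). -/
inductive Initial : FTree → FTree → Prop
  | leafLeaf {Δ} : Initial (.leaf Δ) (.leaf Δ)
  | openLeaf {Δ r ts} : ¬ r.isClosure → Initial (.leaf Δ) (.node Δ r ts)
  | node {Δ r ts₀ ts} : ts₀.length = ts.length →
      (∀ (i : ℕ) t₀ t, ts₀[i]? = some t₀ → ts[i]? = some t → Initial t₀ t) →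
      Initial (.node Δ r ts₀) (.node Δ r ts)

/-- A (total) link from an open GS3 proof-tree `π` to a tableau `T` with
unifier `σ`: each open leaf of `π` is mapped to an open leaf of `T` whose
σ-instantiated formulas all appear in the sequent of the leaf of `π`. -/
structure Link (σ : ℕ → Tm) (π T : FTree) where
  μ : List ℕ → List ℕ
  maps : ∀ p Γs, π.openLeafAt p = some Γs →
    ∃ Δ, T.openLeafAt (μ p) = some Δ ∧ ∀ A ∈ Δ, Fm.substF σ A ∈ Γs

/-- A partial link between two GS3 proof-trees. -/
structure PLink (π θ : FTree) where
  μ : List ℕ → Option (List ℕ)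
  maps : ∀ p Γs q, π.openLeafAt p = some Γs → μ p = some q →
    ∃ Δ, θ.openLeafAt q = some Δ ∧ ∀ A ∈ Δ, A ∈ Γs

/-- A bilink: two partial links with disjoint domains covering all open leaves. -/
structure Bilink (π θ₀ θ₁ : FTree) where
  l0 : PLink π θ₀
  l1 : PLink π θ₁
  disj : ∀ p, (l0.μ p).isSome → (l1.μ p).isSome → False
  cover : ∀ p Γs, π.openLeafAt p = some Γs → (l0.μ p).isSome ∨ (l1.μ p).isSome

/-- A formula appearing somewhere in a tree. -/
inductive InTree (A : Fm) : FTree → Prop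
  | leaf {Δ} : A ∈ Δ → InTree A (.leaf Δ)
  | here {Δ r ts} : A ∈ Δ → InTree A (.node Δ r ts)
  | child {Δ r ts t} : t ∈ ts → InTree A t → InTree A (.node Δ r ts)

mutual
/-- Number of rule applications in a tree. -/
def FTree.ruleCount : FTree → ℕ
  | .leaf _ => 0
  | .node _ _ ts => 1 + ruleCountL ts
def ruleCountL : List FTree → ℕ
  | [] => 0
  | t :: ts => t.ruleCount + ruleCountL ts
end

mutual
/-- Instantiate all formulas of a tree by a substitution (the naive translation). -/
def FTree.substT (σ : ℕ → Tm) : FTree → FTree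
  | .leaf Δ => .leaf (Δ.map (Fm.substF σ))
  | .node Δ r ts => .node (Δ.map (Fm.substF σ)) (r.substR σ) (substTL σ ts)
def substTL (σ : ℕ → Tm) : List FTree → List FTree
  | [] => []
  | t :: ts => t.substT σ :: substTL σ ts
end
section Aux

lemma subAt_append (p : List ℕ) : ∀ (t : FTree) (q : List ℕ),
    t.subAt (p ++ q) = (t.subAt p).bind (fun s => s.subAt q) := by
  induction p with
  | nil => intro t q; simp [FTree.subAt]
  | cons j p ih =>
    intro t q
    cases t with
    | leaf Δ => simp [FTree.subAt]
    | node Δ r ts =>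
      simp only [List.cons_append, FTree.subAt]
      cases ts[j]? with
      | none => simp
      | some t' => simp [ih]

lemma openLeafAt_eq {t : FTree} {p : List ℕ} {Γ : Multiset Fm}
    (h : t.openLeafAt p = some Γ) : t.subAt p = some (.leaf Γ) := by
  unfold FTree.openLeafAt at h
  cases hs : t.subAt p with
  | none => rw [hs] at h; simp at h
  | some s =>
    cases s with
    | leaf Δ => rw [hs] at h; simp at h; rw [h]
    | node Δ r ts => rw [hs] at h; simp at h

lemma openLeafAt_of_subAt {t : FTree} {p : List ℕ} {Γ : Multiset Fm}
    (h : t.subAt p = some (.leaf Γ)) : t.openLeafAt p = some Γ := by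
  unfold FTree.openLeafAt; rw [h]

lemma openLeaf_prefix {t : FTree} {p q : List ℕ} {Γ Γ' : Multiset Fm}
    (hp : t.openLeafAt p = some Γ) (hq : t.openLeafAt q = some Γ') (hpq : p <+: q) :
    p = q := by
  obtain ⟨s, rfl⟩ := hpq
  cases s with
  | nil => simp
  | cons j s =>
    exfalso
    have h1 := openLeafAt_eq hp
    have h2 := openLeafAt_eq hq
    rw [subAt_append, h1] at h2
    simp [FTree.subAt] at h2

lemma openLeafAt_node {Δ : Multiset Fm} {r : RuleApp} {ts : List FTree} {k : ℕ} {q : List ℕ} :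
    (FTree.node Δ r ts).openLeafAt (k :: q) =
      match ts[k]? with
      | some t => t.openLeafAt q
      | none => none := by
  unfold FTree.openLeafAt
  simp only [FTree.subAt]
  cases ts[k]? <;> rfl

end Aux
lemma root_extend (r : RuleApp) (b : List ℕ) (t : FTree) :
    (FTree.extend r b t).root = t.root := by
  match b, t with
  | [], .leaf Δ => simp [FTree.extend, FTree.root]
  | [], .node Δ r' ts => simp [FTree.extend]
  | i :: p, .leaf Δ => simp [FTree.extend]
  | i :: p, .node Δ r' ts => simp [FTree.extend, FTree.root]

lemma extend_openLeafAt (r : RuleApp) :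
    ∀ (b : List ℕ) (t : FTree) (Δ : Multiset Fm), t.openLeafAt b = some Δ →
      ∀ q Γ, (FTree.extend r b t).openLeafAt q = some Γ ↔
        ((¬ b <+: q) ∧ t.openLeafAt q = some Γ) ∨
        (∃ i, q = b ++ [i] ∧ (r.kids Δ)[i]? = some Γ) := by
  intro b
  induction b with
  | nil =>
    intro t Δ hb q Γ
    have ht : t = .leaf Δ := by
      have := openLeafAt_eq hb
      simpa [FTree.subAt] using this
    subst ht
    have hext : FTree.extend r [] (.leaf Δ) = .node Δ r ((r.kids Δ).map .leaf) := by
      simp [FTree.extend]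
    rw [hext]
    constructor
    · intro h
      cases q with
      | nil => simp [FTree.openLeafAt, FTree.subAt] at h
      | cons k q' =>
        right
        rw [openLeafAt_node] at h
        rw [List.getElem?_map] at h
        cases hk : (r.kids Δ)[k]? with
        | none => rw [hk] at h; simp at h
        | some K =>
          rw [hk] at h
          cases q' with
          | nil =>
            simp [FTree.openLeafAt, FTree.subAt] at h
            exact ⟨k, rfl, by rw [hk, h]⟩
          | cons j q'' => simp [FTree.openLeafAt, FTree.subAt] at h
    · rintro (⟨hpre, _⟩ | ⟨i, rfl, hk⟩)
      · exact absurd (List.nil_prefix) hpre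
      · rw [List.nil_append, openLeafAt_node, List.getElem?_map, hk]
        simp [FTree.openLeafAt, FTree.subAt]
  | cons j b' ih =>
    intro t Δ hb q Γ
    cases t with
    | leaf Δ₀ =>
      have := openLeafAt_eq hb
      simp [FTree.subAt] at this
    | node Δ₀ r₀ ts =>
      have hsub := openLeafAt_eq hb
      simp only [FTree.subAt] at hsub
      cases hj : ts[j]? with
      | none => rw [hj] at hsub; simp at hsub
      | some tj =>
        rw [hj] at hsub
        have htj : tj.openLeafAt b' = some Δ := openLeafAt_of_subAt hsub
        have hext : FTree.extend r (j :: b') (.node Δ₀ r₀ ts)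
            = .node Δ₀ r₀ (ts.modify j (FTree.extend r b')) := by
          simp [FTree.extend]
        rw [hext]
        cases q with
        | nil =>
          simp only [FTree.openLeafAt, FTree.subAt]
          constructor
          · intro h; simp at h
          · rintro (⟨_, h⟩ | ⟨i, h, _⟩)
            · simp [FTree.openLeafAt, FTree.subAt] at h
            · simp at h
        | cons k q' =>
          rw [openLeafAt_node, List.getElem?_modify]
          by_cases hjk : j = k
          · subst hjk
            rw [hj]
            rw [show ((fun a => if j = j then FTree.extend r b' a else a) <$> some tj)
                = some (FTree.extend r b' tj) by simp]
            rw [ih tj Δ htj q' Γ]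
            have hnodeq : (FTree.node Δ₀ r₀ ts).openLeafAt (j :: q') = tj.openLeafAt q' := by
              rw [openLeafAt_node, hj]
            constructor
            · rintro (⟨hpre, hq⟩ | ⟨i, rfl, hk⟩)
              · left
                refine ⟨?_, by rw [hnodeq]; exact hq⟩
                intro hc; exact hpre ((List.cons_prefix_cons.mp hc).2)
              · exact Or.inr ⟨i, rfl, hk⟩
            · rintro (⟨hpre, hq⟩ | ⟨i, hq, hk⟩)
              · left
                refine ⟨?_, by rw [hnodeq] at hq; exact hq⟩
                intro hc; exact hpre (List.cons_prefix_cons.mpr ⟨rfl, hc⟩)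
              · right
                refine ⟨i, ?_, hk⟩
                simpa using hq
          · rw [show ((fun a => if j = k then FTree.extend r b' a else a) <$> ts[k]?)
                = ts[k]? by simp [hjk]]
            have hnodeq : (FTree.node Δ₀ r₀ ts).openLeafAt (k :: q')
                = match ts[k]? with | some t => t.openLeafAt q' | none => none :=
              openLeafAt_node
            constructor
            · intro h
              left
              refine ⟨?_, by rw [hnodeq]; exact h⟩
              intro hc; exact hjk ((List.cons_prefix_cons.mp hc).1)
            · rintro (⟨hpre, hq⟩ | ⟨i, hq, hk⟩)
              · rw [hnodeq] at hq; exact hq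
              · exfalso; simp at hq; exact hjk hq.1.symm
lemma WFT_extend {Ok : Multiset Fm → RuleApp → Prop} (r : RuleApp) :
    ∀ (b : List ℕ) (t : FTree), WFT Ok t → ∀ Δ, t.openLeafAt b = some Δ → Ok Δ r →
      WFT Ok (FTree.extend r b t) := by
  intro b
  induction b with
  | nil =>
    intro t hw Δ hb hok
    have ht : t = .leaf Δ := by
      have := openLeafAt_eq hb
      simpa [FTree.subAt] using this
    subst ht
    rw [show FTree.extend r [] (.leaf Δ) = .node Δ r ((r.kids Δ).map .leaf) by
      simp [FTree.extend]]
    refine WFT.node hok ?_ ?_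
    · rw [List.map_map]
      have : (FTree.root ∘ FTree.leaf) = id := by funext K; rfl
      rw [this, List.map_id]
    · intro t' ht'
      simp only [List.mem_map] at ht'
      obtain ⟨K, _, rfl⟩ := ht'
      exact WFT.leaf
  | cons j b' ih =>
    intro t hw Δ hb hok
    cases t with
    | leaf Δ₀ =>
      have := openLeafAt_eq hb
      simp [FTree.subAt] at this
    | node Δ₀ r₀ ts =>
      have hsub := openLeafAt_eq hb
      simp only [FTree.subAt] at hsub
      cases hj : ts[j]? with
      | none => rw [hj] at hsub; simp at hsub
      | some tj =>
        rw [hj] at hsub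
        have htj : tj.openLeafAt b' = some Δ := openLeafAt_of_subAt hsub
        rw [show FTree.extend r (j :: b') (.node Δ₀ r₀ ts)
            = .node Δ₀ r₀ (ts.modify j (FTree.extend r b')) by simp [FTree.extend]]
        cases hw with
        | node hok₀ hroots hkids =>
          refine WFT.node hok₀ ?_ ?_
          · rw [← hroots]
            apply List.ext_getElem?
            intro n
            rw [List.getElem?_map, List.getElem?_map, List.getElem?_modify]
            cases hn : ts[n]? with
            | none => simp
            | some tn =>
              by_cases hjn : j = n
              · simp [hjn, root_extend]
              · simp [hjn]
          · intro t' ht'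
            obtain ⟨n, hn⟩ := List.mem_iff_getElem?.mp ht'
            rw [List.getElem?_modify] at hn
            cases hts : ts[n]? with
            | none => rw [hts] at hn; simp at hn
            | some tn =>
              rw [hts] at hn
              have htn : tn ∈ ts := List.mem_iff_getElem?.mpr ⟨n, hts⟩
              by_cases hjn : j = n
              · subst hjn
                rw [hj] at hts
                injection hts with hts; subst hts
                simp only [if_pos rfl, Option.map_some] at hn
                injection hn with hn
                rw [← hn]
                exact ih tj (hkids tj htn) Δ htj hok
              · simp only [if_neg hjn, Option.map_some] at hn
                injection hn with hn
                rw [← hn]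
                exact hkids tn htn

lemma foldr_extend_char (rσ : RuleApp) :
    ∀ (ps : List (List ℕ)) (π₀ : FTree), ps.Nodup →
      (∀ p ∈ ps, ∃ Γp, π₀.openLeafAt p = some Γp) →
      ∀ q Γ, (ps.foldr (FTree.extend rσ) π₀).openLeafAt q = some Γ ↔
        ((π₀.openLeafAt q = some Γ ∧ q ∉ ps) ∨
         ∃ p ∈ ps, ∃ i Γp, π₀.openLeafAt p = some Γp ∧ q = p ++ [i] ∧
           (rσ.kids Γp)[i]? = some Γ) := by
  intro ps
  induction ps with
  | nil => intro π₀ _ _ q Γ; simp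
  | cons p₀ tail ih =>
    intro π₀ hnd hleaves q Γ
    obtain ⟨Γ₀, hΓ₀⟩ := hleaves p₀ (by simp)
    have hp₀tail : p₀ ∉ tail := (List.nodup_cons.mp hnd).1
    have hnd' := (List.nodup_cons.mp hnd).2
    have hleaves' : ∀ p ∈ tail, ∃ Γp, π₀.openLeafAt p = some Γp :=
      fun p hp => hleaves p (by simp [hp])
    have ihθ := ih π₀ hnd' hleaves'
    have hθp₀ : (tail.foldr (FTree.extend rσ) π₀).openLeafAt p₀ = some Γ₀ := by
      rw [ihθ p₀ Γ₀]; exact Or.inl ⟨hΓ₀, hp₀tail⟩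
    show (FTree.extend rσ p₀ (tail.foldr (FTree.extend rσ) π₀)).openLeafAt q = some Γ ↔ _
    rw [extend_openLeafAt rσ p₀ _ Γ₀ hθp₀ q Γ]
    constructor
    · rintro (⟨hnpre, hq⟩ | ⟨i, rfl, hk⟩)
      · rw [ihθ] at hq
        rcases hq with ⟨hq, hqtail⟩ | ⟨p, hp, i, Γp, h1, rfl, h3⟩
        · left
          refine ⟨hq, ?_⟩
          simp only [List.mem_cons, not_or]
          exact ⟨fun h => hnpre (h ▸ List.prefix_refl _), hqtail⟩
        · exact Or.inr ⟨p, by simp [hp], i, Γp, h1, rfl, h3⟩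
      · exact Or.inr ⟨p₀, by simp, i, Γ₀, hΓ₀, rfl, hk⟩
    · rintro (⟨hq, hqps⟩ | ⟨p, hp, i, Γp, h1, rfl, h3⟩)
      · simp only [List.mem_cons, not_or] at hqps
        left
        refine ⟨?_, by rw [ihθ]; exact Or.inl ⟨hq, hqps.2⟩⟩
        intro hpre
        exact hqps.1 (openLeaf_prefix hΓ₀ hq hpre).symm
      · simp only [List.mem_cons] at hp
        rcases hp with rfl | hp
        · rw [hΓ₀] at h1
          injection h1 with h1; subst h1
          exact Or.inr ⟨i, rfl, h3⟩
        · left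
          refine ⟨?_, by rw [ihθ]; exact Or.inr ⟨p, hp, i, Γp, h1, rfl, h3⟩⟩
          intro hpre
          rcases List.prefix_concat_iff.mp hpre with hEq | hpre'
          · have hpp₀ : p <+: p₀ := hEq ▸ List.prefix_append p [i]
            have := openLeaf_prefix h1 hΓ₀ hpp₀
            rw [← this] at hEq
            simp at hEq
          · have := openLeaf_prefix hΓ₀ h1 hpre'
            exact hp₀tail (this ▸ hp)

lemma foldr_extend_WFT (rσ : RuleApp) :
    ∀ (ps : List (List ℕ)) (π₀ : FTree), ps.Nodup → WFT okGS3 π₀ →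
      (∀ p ∈ ps, ∃ Γp, π₀.openLeafAt p = some Γp ∧ okGS3 Γp rσ) →
      WFT okGS3 (ps.foldr (FTree.extend rσ) π₀) := by
  intro ps
  induction ps with
  | nil => intro π₀ _ h _; exact h
  | cons p₀ tail ih =>
    intro π₀ hnd hw hok
    obtain ⟨Γ₀, hΓ₀, hokΓ₀⟩ := hok p₀ (by simp)
    have hp₀tail : p₀ ∉ tail := (List.nodup_cons.mp hnd).1
    have hnd' := (List.nodup_cons.mp hnd).2
    have hθ := ih π₀ hnd' hw (fun p hp => hok p (by simp [hp]))
    have hθp₀ : (tail.foldr (FTree.extend rσ) π₀).openLeafAt p₀ = some Γ₀ := by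
      rw [foldr_extend_char rσ tail π₀ hnd'
        (fun p hp => (hok p (by simp [hp])).imp (fun _ h => h.1)) p₀ Γ₀]
      exact Or.inl ⟨hΓ₀, hp₀tail⟩
    exact WFT_extend rσ p₀ _ hθ Γ₀ hθp₀ hokΓ₀
lemma beta_ok {σ : ℕ → Tm} {Δ Γ : Multiset Fm} {r : RuleApp}
    (hbeta : r.isBeta) (hok : okTabFV σ Δ r)
    (hsub : ∀ A ∈ Δ, Fm.substF σ A ∈ Γ) : okGS3 Γ (r.substR σ) := by
  cases r <;> simp [RuleApp.isBeta] at hbeta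
  case orR A B =>
    have := hsub _ (show Fm.or A B ∈ Δ from hok)
    simpa [RuleApp.substR, okGS3, Fm.substF] using this
  case impR A B =>
    have := hsub _ (show Fm.imp A B ∈ Δ from hok)
    simpa [RuleApp.substR, okGS3, Fm.substF] using this
  case negAndR A B =>
    have := hsub _ (show Fm.neg (Fm.and A B) ∈ Δ from hok)
    simpa [RuleApp.substR, okGS3, Fm.substF] using this

lemma beta_substR {σ : ℕ → Tm} {r : RuleApp} (hbeta : r.isBeta) :
    (r.substR σ).isBeta := by
  cases r <;> simp [RuleApp.isBeta, RuleApp.substR] at *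

lemma beta_kids_len {r : RuleApp} (hbeta : r.isBeta) (Δ : Multiset Fm) :
    (r.kids Δ).length = 2 := by
  cases r <;> simp [RuleApp.isBeta, RuleApp.kids] at *

lemma beta_kids_map {σ : ℕ → Tm} {r : RuleApp} (hbeta : r.isBeta) {Δ Γ : Multiset Fm}
    (hsub : ∀ A ∈ Δ, Fm.substF σ A ∈ Γ) (i : ℕ) {K K' : Multiset Fm}
    (hK : (r.kids Δ)[i]? = some K) (hK' : ((r.substR σ).kids Γ)[i]? = some K') :
    ∀ A ∈ K, Fm.substF σ A ∈ K' := by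
  cases r <;> simp [RuleApp.isBeta] at hbeta <;>
    simp only [RuleApp.kids, RuleApp.substR] at hK hK' <;>
    rcases i with _ | _ | i <;> simp at hK hK' <;>
    subst hK <;> subst hK' <;>
    intro A hA <;>
    rcases Multiset.mem_cons.mp hA with rfl | hA <;>
    first
      | exact Multiset.mem_cons_of_mem (hsub A hA)
      | simp [Fm.substF, Multiset.mem_cons]

/-- Parallel extension preserves links for β-rules: extending `T₀` at open leaf
`b` by a β-rule splitting `b` into `b.0` and `b.1`, and applying the
corresponding two-premise GS3 β-rule at every open leaf of `π₀` mapped to `b`,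
yields a well-formed proof-tree linked to the extended tableau, the two new
children of each such leaf being mapped to `b.0` and `b.1` respectively and the
link unchanged elsewhere. -/
theorem parallel_extension_beta (σ : ℕ → Tm) (T T₀ π₀ : FTree) (L : Link σ π₀ T₀)
    (hT : WFT (okTabFV σ) T) (hTcl : T.closedT) (hini : Initial T₀ T)
    (hπ : WFT okGS3 π₀) (hroot : π₀.root = T₀.root.map (Fm.substF σ))
    (b : List ℕ) (Δ : Multiset Fm) (r : RuleApp)
    (hb : T₀.openLeafAt b = some Δ) (hrule : T.ruleAt b = some r)
    (hbeta : r.isBeta) (hok : okTabFV σ Δ r)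
    (ps : List (List ℕ)) (hnd : ps.Nodup)
    (hps : ∀ p, p ∈ ps ↔ (∃ Γs, π₀.openLeafAt p = some Γs) ∧ L.μ p = b) :
    WFT okGS3 (ps.foldr (FTree.extend (r.substR σ)) π₀) ∧
      ∃ L₁ : Link σ (ps.foldr (FTree.extend (r.substR σ)) π₀) (FTree.extend r b T₀),
        (∀ p ∈ ps, L₁.μ (p ++ [0]) = b ++ [0] ∧ L₁.μ (p ++ [1]) = b ++ [1]) ∧
        (∀ p Γs, π₀.openLeafAt p = some Γs → p ∉ ps → L₁.μ p = L.μ p) := by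
  have hleaf : ∀ p ∈ ps, ∃ Γp, π₀.openLeafAt p = some Γp := fun p hp => ((hps p).mp hp).1
  have hσΔ : ∀ p ∈ ps, ∀ Γp, π₀.openLeafAt p = some Γp → ∀ A ∈ Δ, Fm.substF σ A ∈ Γp := by
    intro p hp Γp hΓp A hA
    have hμ : L.μ p = b := ((hps p).mp hp).2
    obtain ⟨Δ', hΔ', hsub⟩ := L.maps p Γp hΓp
    rw [hμ, hb] at hΔ'
    injection hΔ' with h
    subst h
    exact hsub A hA
  have hOkps : ∀ p ∈ ps, ∃ Γp, π₀.openLeafAt p = some Γp ∧ okGS3 Γp (r.substR σ) := by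
    intro p hp
    obtain ⟨Γp, hΓp⟩ := hleaf p hp
    exact ⟨Γp, hΓp, beta_ok hbeta hok (hσΔ p hp Γp hΓp)⟩
  refine ⟨foldr_extend_WFT _ ps π₀ hnd hπ hOkps, ?_⟩
  have char := foldr_extend_char (r.substR σ) ps π₀ hnd hleaf
  -- key: dropLast of an open leaf not in ps is not in ps
  have hkey : ∀ q Γ, π₀.openLeafAt q = some Γ → q ∉ ps → q.dropLast ∉ ps := by
    intro q Γ hq hqps hmem
    obtain ⟨Γd, hΓd⟩ := hleaf _ hmem
    have := openLeaf_prefix hΓd hq (List.dropLast_prefix q)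
    rw [this] at hmem
    exact hqps hmem
  have hnew : ∀ (p : List ℕ) (i : ℕ), p ∈ ps →
      (fun q => if q.dropLast ∈ ps then b ++ q.drop (q.length - 1) else L.μ q) (p ++ [i])
        = b ++ [i] := by
    intro p i hp
    have h1 : (p ++ [i]).dropLast = p := List.dropLast_concat
    have h2 : (p ++ [i]).drop ((p ++ [i]).length - 1) = [i] := by
      have : (p ++ [i]).length - 1 = p.length := by simp
      rw [this, List.drop_left]
    simp only [h1, if_pos hp, h2]
  refine ⟨⟨fun q => if q.dropLast ∈ ps then b ++ q.drop (q.length - 1) else L.μ q, ?_⟩,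
    ?_, ?_⟩
  · -- maps
    intro q Γ hq
    rw [char q Γ] at hq
    rcases hq with ⟨hqπ, hqps⟩ | ⟨p, hp, i, Γp, hΓp, rfl, hki⟩
    · -- untouched leaf
      obtain ⟨Δ', hΔ', hsub⟩ := L.maps q Γ hqπ
      refine ⟨Δ', ?_, hsub⟩
      simp only [if_neg (hkey q Γ hqπ hqps)]
      rw [extend_openLeafAt r b T₀ Δ hb]
      left
      refine ⟨?_, hΔ'⟩
      intro hpre
      have hbq : b = L.μ q := openLeaf_prefix (openLeafAt_of_subAt (openLeafAt_eq hb)) hΔ' hpre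
      exact hqps ((hps q).mpr ⟨⟨Γ, hqπ⟩, hbq.symm⟩)
    · -- new leaf p ++ [i]
      have hi : i < ((r.substR σ).kids Γp).length := by
        rcases List.getElem?_eq_some_iff.mp hki with ⟨h, _⟩
        exact h
      rw [beta_kids_len (beta_substR hbeta) Γp] at hi
      have hi' : i < (r.kids Δ).length := by rw [beta_kids_len hbeta Δ]; exact hi
      obtain ⟨Ki, hKi⟩ : ∃ Ki, (r.kids Δ)[i]? = some Ki :=
        ⟨(r.kids Δ)[i], List.getElem?_eq_getElem hi'⟩
      refine ⟨Ki, ?_, beta_kids_map hbeta (hσΔ p hp Γp hΓp) i hKi hki⟩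
      have hn := hnew p i hp; beta_reduce at hn; rw [hn]
      rw [extend_openLeafAt r b T₀ Δ hb]
      exact Or.inr ⟨i, rfl, hKi⟩
  · intro p hp
    exact ⟨hnew p 0 hp, hnew p 1 hp⟩
  · intro q Γ hq hqps
    simp only [if_neg (hkey q Γ hq hqps)]
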